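/- arXiv:2509.20301 — 7 statements merged into one kernel-verified Lean document; each statement's English description precedes it below -/
import Mathlib

section
/- Let c ∈ ℝ^n, b ∈ ℝ^n, let G be a real n×p matrix and H a real n×q matrix. Suppose there exist a q×p matrix Γ and a vector β ∈ ℝ^q such that H·Γ = G, b − c = H·β, and for every row index i one has (Σⱼ |Γᵢⱼ|) + |βᵢ| ≤ 1. Then the zonotope Z(c,G) is contained in the zonotope Z(b,H), i.e., for every λ ∈ ℝ^p with ‖λ‖∞ ≤ 1 there exists μ ∈ ℝ^q with ‖μ‖∞ ≤ 1 such that c + G·λ = b + H·μ. -/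
/-- Zonotope containment via an exact witness (Γ, β):
if H·Γ = G, b − c = H·β, and every row of [Γ | β] has absolute sum at most 1,
then Z(c,G) ⊆ Z(b,H). -/
theorem zonotope_containment_exact_witness
    {n p q : ℕ} (c b : Fin n → ℝ)
    (G : Matrix (Fin n) (Fin p) ℝ) (H : Matrix (Fin n) (Fin q) ℝ)
    (Γ : Matrix (Fin q) (Fin p) ℝ) (β : Fin q → ℝ)
    (hG : H * Γ = G)
    (hb : b - c = H.mulVec β)
    (hrow : ∀ i : Fin q, (∑ j, |Γ i j|) + |β i| ≤ 1) :
    ∀ lam : Fin p → ℝ, ‖lam‖ ≤ 1 →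
      ∃ μ : Fin q → ℝ, ‖μ‖ ≤ 1 ∧ c + G.mulVec lam = b + H.mulVec μ := by
  intro lam hlam
  refine ⟨Γ.mulVec lam - β, ?_, ?_⟩
  · rw [pi_norm_le_iff_of_nonneg (by norm_num)]
    intro i
    have hlamj : ∀ j, |lam j| ≤ 1 := fun j => by
      calc |lam j| = ‖lam j‖ := rfl
        _ ≤ ‖lam‖ := norm_le_pi_norm lam j
        _ ≤ 1 := hlam
    have h1 : |Γ.mulVec lam i| ≤ ∑ j, |Γ i j| := by
      calc |Γ.mulVec lam i| = |∑ j, Γ i j * lam j| := rfl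
        _ ≤ ∑ j, |Γ i j * lam j| := Finset.abs_sum_le_sum_abs _ _
        _ ≤ ∑ j, |Γ i j| := by
            apply Finset.sum_le_sum
            intro j _
            rw [abs_mul]
            calc |Γ i j| * |lam j| ≤ |Γ i j| * 1 :=
                  mul_le_mul_of_nonneg_left (hlamj j) (abs_nonneg _)
              _ = |Γ i j| := mul_one _
    calc ‖(Γ.mulVec lam - β) i‖ = |Γ.mulVec lam i - β i| := rfl
      _ ≤ |Γ.mulVec lam i| + |β i| := abs_sub _ _
      _ ≤ (∑ j, |Γ i j|) + |β i| := by linarith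
      _ ≤ 1 := hrow i
  · have : H.mulVec (Γ.mulVec lam - β) = G.mulVec lam - (b - c) := by
      rw [Matrix.mulVec_sub, Matrix.mulVec_mulVec, hG, hb]
    rw [this]
    funext i
    simp [Pi.add_apply, Pi.sub_apply]
    ring
end

section
/- Let c, b ∈ ℝ^n, let G be a real n×p matrix and H a real n×q matrix, and let ε ≥ 0. Suppose there exist a q×n matrix H⁺ with H·H⁺ = I_n (the n×n identity), a q×p matrix Γ, and a vector β ∈ ℝ^q satisfying: (i) b − c = H·β; (ii) ‖H·Γ − G‖∞ ≤ ε; (iii) for every row index i, (Σⱼ |Γᵢⱼ|) + |βᵢ| ≤ 1 − ε·‖H⁺‖∞. Then the zonotope Z(c,G) is contained in the zonotope Z(b,H): for every λ ∈ ℝ^p with ‖λ‖∞ ≤ 1 there exists μ ∈ ℝ^q with ‖μ‖∞ ≤ 1 such that c + G·λ = b + H·μ. -/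
/-- The infinity operator norm of a real matrix: the maximum over rows of the
sum of absolute values of the entries in that row. -/
noncomputable def matInfNorm {a b : ℕ} (A : Matrix (Fin a) (Fin b) ℝ) : ℝ :=
  ⨆ i : Fin a, ∑ j, |A i j|

lemma rowsum_le_matInfNorm {a b : ℕ} (A : Matrix (Fin a) (Fin b) ℝ) (i : Fin a) :
    ∑ j, |A i j| ≤ matInfNorm A := by
  unfold matInfNorm
  exact le_ciSup (f := fun i => ∑ j, |A i j|) (Set.Finite.bddAbove (Set.finite_range _)) i

lemma mulVec_abs_le {a b : ℕ} (A : Matrix (Fin a) (Fin b) ℝ) (v : Fin b → ℝ) (r : ℝ)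
    (hv : ∀ j, |v j| ≤ r) (i : Fin a) : |A.mulVec v i| ≤ (∑ j, |A i j|) * r := by
  rw [Matrix.mulVec, dotProduct]
  calc |∑ j, A i j * v j| ≤ ∑ j, |A i j * v j| := Finset.abs_sum_le_sum_abs _ _
    _ ≤ ∑ j, |A i j| * r := by
        refine Finset.sum_le_sum fun j _ => ?_
        rw [abs_mul]
        exact mul_le_mul_of_nonneg_left (hv j) (abs_nonneg _)
    _ = (∑ j, |A i j|) * r := (Finset.sum_mul ..).symm

/-- Zonotope containment via a relaxed (perturbed) witness: if H has right inverse H⁺,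
b − c = H·β, ‖H·Γ − G‖∞ ≤ ε and every row of [Γ | β] has absolute sum at most
1 − ε·‖H⁺‖∞, then Z(c,G) ⊆ Z(b,H). -/
theorem zonotope_containment_relaxed_witness
    {n p q : ℕ} (c b : Fin n → ℝ)
    (G : Matrix (Fin n) (Fin p) ℝ) (H : Matrix (Fin n) (Fin q) ℝ)
    (ε : ℝ) (hε : 0 ≤ ε)
    (Hplus : Matrix (Fin q) (Fin n) ℝ) (Γ : Matrix (Fin q) (Fin p) ℝ) (β : Fin q → ℝ)
    (hinv : H * Hplus = 1)
    (hb : b - c = H.mulVec β)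
    (hpert : matInfNorm (H * Γ - G) ≤ ε)
    (hrow : ∀ i : Fin q, (∑ j, |Γ i j|) + |β i| ≤ 1 - ε * matInfNorm Hplus) :
    ∀ lam : Fin p → ℝ, ‖lam‖ ≤ 1 →
      ∃ μ : Fin q → ℝ, ‖μ‖ ≤ 1 ∧ c + G.mulVec lam = b + H.mulVec μ := by
  intro lam hlam
  have hlamj : ∀ j, |lam j| ≤ 1 := fun j => by
    simpa [Real.norm_eq_abs] using (norm_le_pi_norm lam j).trans hlam
  set v : Fin n → ℝ := (G - H * Γ).mulVec lam with hv
  have hvk : ∀ k, |v k| ≤ ε := by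
    intro k
    have h1 := mulVec_abs_le (G - H * Γ) lam 1 hlamj k
    have h2 : ∑ j, |(G - H * Γ) k j| = ∑ j, |(H * Γ - G) k j| := by
      refine Finset.sum_congr rfl fun j _ => ?_
      rw [← abs_neg]; congr 1; simp [Matrix.sub_apply]
    have h3 := rowsum_le_matInfNorm (H * Γ - G) k
    calc |v k| ≤ (∑ j, |(G - H * Γ) k j|) * 1 := h1
      _ = ∑ j, |(H * Γ - G) k j| := by rw [mul_one, h2]
      _ ≤ ε := h3.trans hpert
  refine ⟨-β + Γ.mulVec lam + Hplus.mulVec v, ?_, ?_⟩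
  · rw [pi_norm_le_iff_of_nonneg zero_le_one]
    intro i
    rw [Real.norm_eq_abs]
    have h1 : |Γ.mulVec lam i| ≤ ∑ j, |Γ i j| := by
      simpa using mulVec_abs_le Γ lam 1 hlamj i
    have h2 : |Hplus.mulVec v i| ≤ (∑ k, |Hplus i k|) * ε := mulVec_abs_le Hplus v ε hvk i
    have h3 : (∑ k, |Hplus i k|) * ε ≤ matInfNorm Hplus * ε :=
      mul_le_mul_of_nonneg_right (rowsum_le_matInfNorm Hplus i) hε
    have hr := hrow i
    calc |(-β + Γ.mulVec lam + Hplus.mulVec v) i|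
        = |(-β i) + Γ.mulVec lam i + Hplus.mulVec v i| := rfl
      _ ≤ |(-β i)| + |Γ.mulVec lam i| + |Hplus.mulVec v i| := abs_add_three ..
      _ ≤ |β i| + (∑ j, |Γ i j|) + matInfNorm Hplus * ε := by
          rw [abs_neg]; gcongr; exact h2.trans h3
      _ ≤ 1 := by nlinarith
  · have hHv : H.mulVec (Hplus.mulVec v) = v := by
      rw [Matrix.mulVec_mulVec, hinv, Matrix.one_mulVec]
    have hexp : H.mulVec (-β + Γ.mulVec lam + Hplus.mulVec v)
        = -(H.mulVec β) + (H * Γ).mulVec lam + v := by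
      rw [Matrix.mulVec_add, Matrix.mulVec_add, Matrix.mulVec_neg, hHv,
        ← Matrix.mulVec_mulVec]
    rw [hexp, ← hb, hv, Matrix.sub_mulVec]
    abel
end

section
/- Let T ≥ 0 and let g : ℝ → ℝ be differentiable on [0,T]. Suppose g(0) ≥ 0 and, for every t ∈ [0,T], g(t) ≥ 0 implies g′(t) > 0. Then g(t) ≥ 0 for all t ∈ [0,T]. -/
/-- Closed differential induction (scalar): if g(0) ≥ 0 and g′(t) > 0 whenever
g(t) ≥ 0 on [0,T], then g(t) ≥ 0 on all of [0,T]. -/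
theorem closed_differential_induction
    (T : ℝ) (hT : 0 ≤ T) (g g' : ℝ → ℝ)
    (hg : ∀ t ∈ Set.Icc (0 : ℝ) T, HasDerivWithinAt g (g' t) (Set.Icc (0 : ℝ) T) t)
    (h0 : 0 ≤ g 0)
    (hind : ∀ t ∈ Set.Icc (0 : ℝ) T, 0 ≤ g t → 0 < g' t) :
    ∀ t ∈ Set.Icc (0 : ℝ) T, 0 ≤ g t := by
  by_contra h
  push_neg at h
  obtain ⟨t, ht, htg⟩ := h
  set A : Set ℝ := {s | s ∈ Set.Icc (0 : ℝ) T ∧ g s < 0} with hA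
  have hAne : A.Nonempty := ⟨t, ht, htg⟩
  have hAbdd : BddBelow A := ⟨0, fun a ha => ha.1.1⟩
  set c := sInf A with hc
  have hc0 : 0 ≤ c := le_csInf hAne (fun a ha => ha.1.1)
  have hcT : c ≤ T := le_trans (csInf_le hAbdd ⟨ht, htg⟩) ht.2
  have hcmem : c ∈ Set.Icc (0 : ℝ) T := ⟨hc0, hcT⟩
  have hcont : ContinuousOn g (Set.Icc (0 : ℝ) T) :=
    fun s hs => (hg s hs).continuousWithinAt
  -- g c ≥ 0
  have hgc : 0 ≤ g c := by
    by_contra hneg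
    push_neg at hneg
    rcases eq_or_lt_of_le hc0 with h0c | h0c
    · rw [← h0c] at hneg; linarith
    · -- continuity gives g < 0 near c; pick a point below c in A
      have hev : ∀ᶠ s in nhdsWithin c (Set.Icc (0:ℝ) T), g s < 0 :=
        (hcont c hcmem).eventually_lt_const hneg
      rw [Filter.eventually_iff, Metric.mem_nhdsWithin_iff] at hev
      obtain ⟨ε, hε, hball⟩ := hev
      set s := max 0 (c - ε / 2) with hs
      have hslt : s < c := by
        apply max_lt h0c
        linarith
      have hsmem : s ∈ Set.Icc (0:ℝ) T := ⟨le_max_left _ _, le_trans hslt.le hcT⟩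
      have hdist : dist s c < ε := by
        rw [Real.dist_eq, abs_lt]
        constructor
        · have : c - ε / 2 ≤ s := le_max_right _ _
          linarith
        · linarith
      have : g s < 0 := hball ⟨Metric.mem_ball.2 hdist, hsmem⟩
      exact absurd (csInf_le hAbdd ⟨hsmem, this⟩) (not_le.2 hslt)
  -- g' c > 0
  have hgc' : 0 < g' c := hind c hcmem hgc
  -- slope positivity near c
  have hslope : Filter.Tendsto (slope g c)
      (nhdsWithin c (Set.Icc (0:ℝ) T \ {c})) (nhds (g' c)) :=
    hasDerivWithinAt_iff_tendsto_slope.mp (hg c hcmem)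
  have hev : ∀ᶠ s in nhdsWithin c (Set.Icc (0:ℝ) T \ {c}), 0 < slope g c s :=
    hslope.eventually (eventually_gt_nhds hgc')
  rw [Filter.eventually_iff, Metric.mem_nhdsWithin_iff] at hev
  obtain ⟨ε, hε, hball⟩ := hev
  -- pick a ∈ A with c ≤ a < c + ε
  obtain ⟨a, haA, halt⟩ := exists_lt_of_csInf_lt hAne (show sInf A < c + ε by linarith)
  have hca : c ≤ a := csInf_le hAbdd haA
  have hane : a ≠ c := by
    intro heq
    exact absurd hgc (not_le.2 (heq ▸ haA.2))
  have hdist : dist a c < ε := by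
    rw [Real.dist_eq, abs_lt]
    constructor <;> [linarith [hca]; linarith]
  have hpos : 0 < slope g c a := hball ⟨Metric.mem_ball.2 hdist, haA.1, hane⟩
  have hca' : 0 < a - c := sub_pos.2 (lt_of_le_of_ne hca (Ne.symm hane))
  rw [slope_def_field, div_pos_iff] at hpos
  rcases hpos with ⟨h1, h2⟩ | ⟨h1, h2⟩
  · -- g a - g c > 0, a - c > 0 → g a > g c ≥ 0, contradiction with g a < 0
    have : 0 ≤ g a := le_trans hgc (by linarith)
    exact absurd this (not_le.2 haA.2)
  · linarith
end

section
/- Let T ≥ 0 and let g, L, U : ℝ → ℝ^n be differentiable on [0,T]. Suppose Lᵢ(0) ≤ gᵢ(0) ≤ Uᵢ(0) for all i, and for every t ∈ [0,T], if Lᵢ(t) ≤ gᵢ(t) ≤ Uᵢ(t) for all i, then Lᵢ′(t) < gᵢ′(t) < Uᵢ′(t) for all i. Then for every t ∈ [0,T] and every i, Lᵢ(t) ≤ gᵢ(t) ≤ Uᵢ(t). -/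
open Set Filter Topology

private lemma slope_pos_eventually {x : ℝ} {s : Set ℝ} {d : ℝ → ℝ} {d' : ℝ}
    (hd : HasDerivWithinAt d d' s x) (hpos : 0 < d') :
    ∀ᶠ t in 𝓝[s \ {x}] x, 0 < slope d x t :=
  (hasDerivWithinAt_iff_tendsto_slope.1 hd).eventually (eventually_gt_nhds hpos)

/-- Vector-valued box invariance: a differentiable curve g that starts inside the
moving box [L(t),U(t)] and whose componentwise derivatives lie strictly between the
derivatives of the box bounds whenever g is inside the box, remains inside the box. -/
theorem box_invariance
    {n : ℕ} (T : ℝ) (hT : 0 ≤ T)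
    (g L U g' L' U' : ℝ → Fin n → ℝ)
    (hg : ∀ t ∈ Set.Icc (0 : ℝ) T, HasDerivWithinAt g (g' t) (Set.Icc (0 : ℝ) T) t)
    (hL : ∀ t ∈ Set.Icc (0 : ℝ) T, HasDerivWithinAt L (L' t) (Set.Icc (0 : ℝ) T) t)
    (hU : ∀ t ∈ Set.Icc (0 : ℝ) T, HasDerivWithinAt U (U' t) (Set.Icc (0 : ℝ) T) t)
    (h0 : ∀ i, L 0 i ≤ g 0 i ∧ g 0 i ≤ U 0 i)
    (hind : ∀ t ∈ Set.Icc (0 : ℝ) T,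
      (∀ i, L t i ≤ g t i ∧ g t i ≤ U t i) →
      ∀ i, L' t i < g' t i ∧ g' t i < U' t i) :
    ∀ t ∈ Set.Icc (0 : ℝ) T, ∀ i, L t i ≤ g t i ∧ g t i ≤ U t i := by
  set S : Set ℝ := {t | ∀ i, L t i ≤ g t i ∧ g t i ≤ U t i} with hSdef
  suffices h : Set.Icc (0 : ℝ) T ⊆ S by exact fun t ht i => h ht i
  -- closedness of S ∩ Icc 0 T
  have hcont : ContinuousOn (fun t => (g t, L t, U t)) (Set.Icc (0 : ℝ) T) := by
    refine ContinuousOn.prodMk ?_ (ContinuousOn.prodMk ?_ ?_)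
    · exact fun t ht => (hg t ht).continuousWithinAt
    · exact fun t ht => (hL t ht).continuousWithinAt
    · exact fun t ht => (hU t ht).continuousWithinAt
  have hKclosed : IsClosed {p : (Fin n → ℝ) × (Fin n → ℝ) × (Fin n → ℝ) |
      ∀ i, p.2.1 i ≤ p.1 i ∧ p.1 i ≤ p.2.2 i} := by
    have : {p : (Fin n → ℝ) × (Fin n → ℝ) × (Fin n → ℝ) |
        ∀ i, p.2.1 i ≤ p.1 i ∧ p.1 i ≤ p.2.2 i} =
        ⋂ i, ({p | p.2.1 i ≤ p.1 i} ∩ {p | p.1 i ≤ p.2.2 i}) := by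
      ext p; simp [Set.mem_iInter, forall_and]
    rw [this]
    refine isClosed_iInter fun i => IsClosed.inter ?_ ?_
    · exact isClosed_le (((continuous_apply i).comp (continuous_fst.comp continuous_snd)))
        ((continuous_apply i).comp continuous_fst)
    · exact isClosed_le ((continuous_apply i).comp continuous_fst)
        ((continuous_apply i).comp (continuous_snd.comp continuous_snd))
  have hclosed : IsClosed (S ∩ Set.Icc (0 : ℝ) T) := by
    have heq : S ∩ Set.Icc (0 : ℝ) T = Set.Icc (0 : ℝ) T ∩
        (fun t => (g t, L t, U t)) ⁻¹' {p : (Fin n → ℝ) × (Fin n → ℝ) × (Fin n → ℝ) |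
          ∀ i, p.2.1 i ≤ p.1 i ∧ p.1 i ≤ p.2.2 i} := by
      ext t; constructor
      · rintro ⟨h1, h2⟩; exact ⟨h2, h1⟩
      · rintro ⟨h1, h2⟩; exact ⟨h2, h1⟩
    rw [heq]
    exact hcont.preimage_isClosed_of_isClosed isClosed_Icc hKclosed
  refine hclosed.Icc_subset_of_forall_exists_gt (fun i => h0 i) ?_
  rintro x ⟨hxS, hx0, hxT⟩ y hy
  have hxI : x ∈ Set.Icc (0 : ℝ) T := ⟨hx0, hxT.le⟩
  have hderiv := hind x hxI hxS
  set m := min y T with hm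
  have hxm : x < m := lt_min hy hxT
  -- componentwise derivatives
  have hgc : ∀ i, HasDerivWithinAt (fun t => g t i) (g' x i) (Set.Icc 0 T) x :=
    fun i => hasDerivWithinAt_pi.1 (hg x hxI) i
  have hLc : ∀ i, HasDerivWithinAt (fun t => L t i) (L' x i) (Set.Icc 0 T) x :=
    fun i => hasDerivWithinAt_pi.1 (hL x hxI) i
  have hUc : ∀ i, HasDerivWithinAt (fun t => U t i) (U' x i) (Set.Icc 0 T) x :=
    fun i => hasDerivWithinAt_pi.1 (hU x hxI) i
  -- the filter of points just to the right of x, inside (x, m]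
  have hIocmem : Set.Ioc x m ∈ 𝓝[>] x := Ioc_mem_nhdsGT_of_mem ⟨le_refl x, hxm⟩
  have hsub : Set.Ioc x m ⊆ Set.Icc (0 : ℝ) T \ {x} := by
    rintro t ⟨ht1, ht2⟩
    exact ⟨⟨hx0.trans ht1.le, ht2.trans (min_le_right y T)⟩, (ne_of_gt ht1)⟩
  have hle : 𝓝[>] x ≤ 𝓝[Set.Icc (0 : ℝ) T \ {x}] x :=
    nhdsWithin_le_of_mem (mem_of_superset hIocmem hsub)
  have hslopes : ∀ᶠ t in 𝓝[>] x, ∀ i,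
      0 < slope (fun t => g t i - L t i) x t ∧ 0 < slope (fun t => U t i - g t i) x t := by
    rw [eventually_all]
    intro i
    have h1 : ∀ᶠ t in 𝓝[Set.Icc (0:ℝ) T \ {x}] x, 0 < slope (fun t => g t i - L t i) x t :=
      slope_pos_eventually ((hgc i).sub (hLc i)) (sub_pos.2 (hderiv i).1)
    have h2 : ∀ᶠ t in 𝓝[Set.Icc (0:ℝ) T \ {x}] x, 0 < slope (fun t => U t i - g t i) x t :=
      slope_pos_eventually ((hUc i).sub (hgc i)) (sub_pos.2 (hderiv i).2)
    exact ((h1.and h2).filter_mono hle)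
  obtain ⟨t, htIoc, htslope⟩ := ((Filter.eventually_mem_set.2 hIocmem).and hslopes).exists
  refine ⟨t, ?_, htIoc.1, htIoc.2.trans (min_le_left y T)⟩
  intro i
  have htx : 0 < t - x := sub_pos.2 htIoc.1
  have key : ∀ d : ℝ → ℝ, 0 < slope d x t → d x < d t := by
    intro d hs
    rw [slope_def_field, div_pos_iff] at hs
    rcases hs with ⟨h1, _⟩ | ⟨_, h2⟩
    · linarith [sub_pos.1 h1]
    · linarith
  have k1 := key _ (htslope i).1
  have k2 := key _ (htslope i).2
  have hxi := hxS i
  constructor <;> [linarith [hxi.1]; linarith [hxi.2]]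
end

section
/- Let Δt ≥ 0, let f : ℝ^n → ℝ^n, and let p, I⁻, I⁺ : ℝ → ℝ^n be differentiable on [0,Δt]. Let x : ℝ → ℝ^n be differentiable on [0,Δt] with x′(t) = f(x(t)) for all t ∈ [0,Δt]. Suppose (i) I⁻(0) ≤ x(0) − p(0) ≤ I⁺(0) componentwise, and (ii) for every t ∈ [0,Δt], if I⁻(t) ≤ x(t) − p(t) ≤ I⁺(t) componentwise then (I⁻)′ᵢ(t) < fᵢ(x(t)) − p′ᵢ(t) < (I⁺)′ᵢ(t) for all i. Then for every t ∈ [0,Δt], I⁻(t) ≤ x(t) − p(t) ≤ I⁺(t) componentwise. -/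
open Set Filter Topology

private lemma hasDerivWithinAt_proj {n : ℕ} {F : ℝ → Fin n → ℝ} {F' : Fin n → ℝ}
    {s : Set ℝ} {t : ℝ} (h : HasDerivWithinAt F F' s t) (i : Fin n) :
    HasDerivWithinAt (fun u => F u i) (F' i) s t := by
  have := ((ContinuousLinearMap.proj i :
    (Fin n → ℝ) →L[ℝ] ℝ)).hasFDerivAt.comp_hasDerivWithinAt t h
  exact this

private lemma pos_invariance {ι : Type*} [Finite ι] (Δt : ℝ) (hΔt : 0 ≤ Δt)
    (G G' : ι → ℝ → ℝ)
    (hG : ∀ i, ∀ t ∈ Icc (0 : ℝ) Δt, HasDerivWithinAt (G i) (G' i t) (Icc (0 : ℝ) Δt) t)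
    (h0 : ∀ i, 0 ≤ G i 0)
    (hind : ∀ t ∈ Icc (0 : ℝ) Δt, (∀ i, 0 ≤ G i t) → ∀ i, 0 < G' i t) :
    ∀ t ∈ Icc (0 : ℝ) Δt, ∀ i, 0 ≤ G i t := by
  set S : Set ℝ := {t | t ∈ Icc (0 : ℝ) Δt ∧ ∀ s ∈ Icc (0 : ℝ) t, ∀ i, 0 ≤ G i s} with hS
  have h0S : (0 : ℝ) ∈ S := by
    refine ⟨⟨le_refl _, hΔt⟩, ?_⟩
    intro s hs i
    have : s = 0 := le_antisymm hs.2 hs.1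
    rw [this]; exact h0 i
  have hbdd : BddAbove S := ⟨Δt, fun t ht => ht.1.2⟩
  have hne : S.Nonempty := ⟨0, h0S⟩
  set T := sSup S with hT
  have hT0 : 0 ≤ T := le_csSup hbdd h0S
  have hTΔ : T ≤ Δt := csSup_le hne fun t ht => ht.1.2
  -- everything up to (and including) T is nonneg
  have key : ∀ s ∈ Icc (0 : ℝ) T, ∀ i, 0 ≤ G i s := by
    intro s hs i
    rcases lt_or_eq_of_le hs.2 with hlt | heq
    · obtain ⟨t', ht'S, hst'⟩ := exists_lt_of_lt_csSup hne hlt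
      exact ht'S.2 s ⟨hs.1, hst'.le⟩ i
    · subst heq
      rcases eq_or_lt_of_le hs.1 with h0s | h0s
    
      · rw [← h0s]; exact h0 i
      · -- s > 0, use continuity from the left
        have hc : ContinuousWithinAt (G i) (Icc (0 : ℝ) Δt) T :=
          (hG i T ⟨hT0, hTΔ⟩ |>.continuousWithinAt)
        have tend : Tendsto (G i) (𝓝[Ico (0:ℝ) T] T) (𝓝 (G i T)) :=
          hc.mono_left (nhdsWithin_mono _ fun u hu => ⟨hu.1, hu.2.le.trans hTΔ⟩)
        have hnb : (𝓝[Ico (0:ℝ) T] T).NeBot := by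
          rw [nhdsWithin_Ico_eq_nhdsLT h0s]; infer_instance
        refine ge_of_tendsto tend ?_
        filter_upwards [self_mem_nhdsWithin] with u hu
        obtain ⟨t', ht'S, hut'⟩ := exists_lt_of_lt_csSup hne hu.2
        exact ht'S.2 u ⟨hu.1, hut'.le⟩ i
  have hTS : T ∈ S := ⟨⟨hT0, hTΔ⟩, key⟩
  have hTeq : T = Δt := by
    by_contra hne'
    have hlt : T < Δt := lt_of_le_of_ne hTΔ hne'
    have hPT : ∀ i, 0 ≤ G i T := key T ⟨hT0, le_refl _⟩
    have hder : ∀ i, 0 < G' i T := hind T ⟨hT0, hTΔ⟩ hPT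
    have hsub : Ioc T Δt ⊆ Icc (0 : ℝ) Δt \ {T} := by
      intro u hu
      exact ⟨⟨hT0.trans hu.1.le, hu.2⟩, ne_of_gt hu.1⟩
    have hev : ∀ᶠ u in 𝓝[Ioc T Δt] T, ∀ i, 0 < slope (G i) T u := by
      rw [eventually_all]
      intro i
      have htend : Tendsto (slope (G i) T) (𝓝[Icc (0:ℝ) Δt \ {T}] T) (𝓝 (G' i T)) :=
        (hasDerivWithinAt_iff_tendsto_slope).mp (hG i T ⟨hT0, hTΔ⟩)
      exact (htend.mono_left (nhdsWithin_mono _ hsub)).eventually (eventually_gt_nhds (hder i))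
    rw [nhdsWithin_Ioc_eq_nhdsGT hlt] at hev
    obtain ⟨u, hu, hsub2⟩ := mem_nhdsGT_iff_exists_Ioc_subset.mp hev
    set t' := min u Δt with ht'
    have hTt' : T < t' := lt_min hu hlt
    have ht'S : t' ∈ S := by
      refine ⟨⟨hT0.trans hTt'.le, min_le_right _ _⟩, ?_⟩
      intro s hsI i
      rcases le_or_gt s T with hsT | hsT
      · exact key s ⟨hsI.1, hsT⟩ i
      · have hsIoc : s ∈ Ioc T u := ⟨hsT, hsI.2.trans (min_le_left _ _)⟩
        have hslope : 0 < slope (G i) T s := hsub2 hsIoc i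
        rw [slope_def_field] at hslope
        have hpos : 0 < s - T := sub_pos.mpr hsT
        have : 0 < G i s - G i T := by
          have := (div_pos_iff).mp hslope
          rcases this with ⟨h1, _⟩ | ⟨_, h2⟩
          · exact h1
          · linarith
        linarith [hPT i]
    have : t' ≤ T := le_csSup hbdd ht'S
    linarith
  intro t ht i
  exact key t ⟨ht.1, hTeq ▸ ht.2⟩ i

/-- Validity of Taylor models for ODE flows: if the error x(t) − p(t) starts in the
interval [I⁻(0), I⁺(0)] and, whenever it is inside [I⁻(t), I⁺(t)], its componentwise
derivative f(x(t)) − p′(t) lies strictly between the derivatives of the interval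
bounds, then x(t) − p(t) stays inside [I⁻(t), I⁺(t)] on all of [0,Δt]. -/
theorem taylor_model_validity
    {n : ℕ} (Δt : ℝ) (hΔt : 0 ≤ Δt)
    (f : (Fin n → ℝ) → (Fin n → ℝ))
    (p Ilo Ihi p' Ilo' Ihi' : ℝ → Fin n → ℝ)
    (hp : ∀ t ∈ Set.Icc (0 : ℝ) Δt, HasDerivWithinAt p (p' t) (Set.Icc (0 : ℝ) Δt) t)
    (hIlo : ∀ t ∈ Set.Icc (0 : ℝ) Δt, HasDerivWithinAt Ilo (Ilo' t) (Set.Icc (0 : ℝ) Δt) t)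
    (hIhi : ∀ t ∈ Set.Icc (0 : ℝ) Δt, HasDerivWithinAt Ihi (Ihi' t) (Set.Icc (0 : ℝ) Δt) t)
    (x : ℝ → Fin n → ℝ)
    (hx : ∀ t ∈ Set.Icc (0 : ℝ) Δt, HasDerivWithinAt x (f (x t)) (Set.Icc (0 : ℝ) Δt) t)
    (h0 : ∀ i, Ilo 0 i ≤ x 0 i - p 0 i ∧ x 0 i - p 0 i ≤ Ihi 0 i)
    (hind : ∀ t ∈ Set.Icc (0 : ℝ) Δt,
      (∀ i, Ilo t i ≤ x t i - p t i ∧ x t i - p t i ≤ Ihi t i) →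
      ∀ i, Ilo' t i < f (x t) i - p' t i ∧ f (x t) i - p' t i < Ihi' t i) :
    ∀ t ∈ Set.Icc (0 : ℝ) Δt, ∀ i, Ilo t i ≤ x t i - p t i ∧ x t i - p t i ≤ Ihi t i := by
  set G : (Fin n ⊕ Fin n) → ℝ → ℝ := fun j t => match j with
    | Sum.inl i => x t i - p t i - Ilo t i
    | Sum.inr i => Ihi t i - (x t i - p t i) with hGdef
  set G' : (Fin n ⊕ Fin n) → ℝ → ℝ := fun j t => match j with
    | Sum.inl i => f (x t) i - p' t i - Ilo' t i
    | Sum.inr i => Ihi' t i - (f (x t) i - p' t i) with hG'def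
  have hG : ∀ j, ∀ t ∈ Set.Icc (0 : ℝ) Δt,
      HasDerivWithinAt (G j) (G' j t) (Set.Icc (0 : ℝ) Δt) t := by
    rintro (i | i) t ht
    · exact ((hasDerivWithinAt_proj (hx t ht) i).sub
        (hasDerivWithinAt_proj (hp t ht) i)).sub (hasDerivWithinAt_proj (hIlo t ht) i)
    · exact (hasDerivWithinAt_proj (hIhi t ht) i).sub
        ((hasDerivWithinAt_proj (hx t ht) i).sub (hasDerivWithinAt_proj (hp t ht) i))
  have hG0 : ∀ j, 0 ≤ G j 0 := by
    rintro (i | i)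
    · simpa [hGdef] using sub_nonneg.mpr (h0 i).1
    · simpa [hGdef] using sub_nonneg.mpr (h0 i).2
  have hGind : ∀ t ∈ Set.Icc (0 : ℝ) Δt, (∀ j, 0 ≤ G j t) → ∀ j, 0 < G' j t := by
    intro t ht hnn
    have hbounds : ∀ i, Ilo t i ≤ x t i - p t i ∧ x t i - p t i ≤ Ihi t i := by
      intro i
      constructor
      · have := hnn (Sum.inl i); simp [hGdef] at this; linarith
      · have := hnn (Sum.inr i); simp [hGdef] at this; linarith
    have := hind t ht hbounds
    rintro (i | i)
    · have := (this i).1; simp [hG'def]; linarith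
    · have := (this i).2; simp [hG'def]; linarith
  have := pos_invariance Δt hΔt G G' hG hG0 hGind
  intro t ht i
  constructor
  · have := this t ht (Sum.inl i); simp [hGdef] at this; linarith
  · have := this t ht (Sum.inr i); simp [hGdef] at this; linarith
end

section
/- Let Δt ∈ ℝ, let p : ℝ × ℝ^k → ℝ^n be differentiable in its second argument at (Δt, 0) with Jacobian D_λ p(Δt,0) (an n×k matrix), let l, u ∈ ℝ^n with l ≤ u componentwise, and let R⁻, R⁺ ∈ ℝ^n be such that for every λ ∈ ℝ^k with ‖λ‖∞ ≤ 1, R⁻ ≤ p(Δt,λ) − p(Δt,0) − D_λ p(Δt,0)·λ ≤ R⁺ componentwise. Define b := p(Δt,0) + (l+u)/2 + (R⁻+R⁺)/2 and let H be the n×(k+2n) matrix [D_λ p(Δt,0) | ½·diag(u−l) | ½·diag(R⁺−R⁻)]. Then every y ∈ ℝ^n for which there exists λ with ‖λ‖∞ ≤ 1 and l ≤ y − p(Δt,λ) ≤ u componentwise satisfies y ∈ Z(b,H), i.e., there exists μ ∈ ℝ^{k+2n} with ‖μ‖∞ ≤ 1 and y = b + H·μ. -/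
private lemma zono_aux (m M a : ℝ) (h1 : m ≤ a) (h2 : a ≤ M) :
    |(if M - m = 0 then (0:ℝ) else (a - (m + M) / 2) / ((M - m) / 2))| ≤ 1 ∧
    (if M - m = 0 then (0:ℝ) else (a - (m + M) / 2) / ((M - m) / 2)) * ((M - m) / 2)
      = a - (m + M) / 2 := by
  by_cases h : M - m = 0
  · constructor
    · simp [h]
    · simp only [h, if_pos]; rw [zero_mul]; linarith
  · have hpos : 0 < (M - m) / 2 := by
      rcases lt_or_eq_of_le (by linarith : m ≤ M) with h' | h'
      · linarith
      · exact absurd (by linarith) h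
    constructor
    · simp only [h, if_neg, not_false_iff]
      rw [abs_le]
      constructor
      · rw [le_div_iff₀ hpos]; linarith
      · rw [div_le_one hpos]; linarith
    · simp only [h, if_neg, not_false_iff]
      field_simp

/-- Zonotope enclosure of the Taylor-model reachable set at the sampling instant Δt:
any point y with y − p(Δt,λ) in the error box [l,u] for some ‖λ‖∞ ≤ 1 lies in the
zonotope with center b = p(Δt,0) + mid[l,u] + mid[R⁻,R⁺] and generator matrix
H = [D_λp(Δt,0) | ½·diag(u−l) | ½·diag(R⁺−R⁻)]. -/
theorem zonotope_reach_discrete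
    {n k : ℕ} (Δt : ℝ)
    (p : ℝ → (Fin k → ℝ) → (Fin n → ℝ))
    (D : Matrix (Fin n) (Fin k) ℝ)
    (hD : HasFDerivAt (fun lam => p Δt lam)
      (Matrix.mulVecLin D).toContinuousLinearMap 0)
    (l u : Fin n → ℝ) (hlu : ∀ i, l i ≤ u i)
    (Rlo Rhi : Fin n → ℝ)
    (hR : ∀ lam : Fin k → ℝ, ‖lam‖ ≤ 1 →
      ∀ i, Rlo i ≤ p Δt lam i - p Δt 0 i - D.mulVec lam i ∧
           p Δt lam i - p Δt 0 i - D.mulVec lam i ≤ Rhi i)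
    (b : Fin n → ℝ)
    (hb : b = fun i => p Δt 0 i + (l i + u i) / 2 + (Rlo i + Rhi i) / 2)
    (H : Matrix (Fin n) (Fin k ⊕ (Fin n ⊕ Fin n)) ℝ)
    (hH : H = Matrix.of fun i j => Sum.elim (fun jk => D i jk)
      (Sum.elim (fun jn => if i = jn then (u i - l i) / 2 else 0)
                (fun jn => if i = jn then (Rhi i - Rlo i) / 2 else 0)) j) :
    ∀ y : Fin n → ℝ,
      (∃ lam : Fin k → ℝ, ‖lam‖ ≤ 1 ∧
        ∀ i, l i ≤ y i - p Δt lam i ∧ y i - p Δt lam i ≤ u i) →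
      ∃ μ : (Fin k ⊕ (Fin n ⊕ Fin n)) → ℝ, ‖μ‖ ≤ 1 ∧ y = b + H.mulVec μ := by
  rintro y ⟨lam, hlam, hy⟩
  have hRr := hR lam hlam
  set α : Fin n → ℝ := fun i =>
    if u i - l i = 0 then 0
    else ((y i - p Δt lam i) - (l i + u i) / 2) / ((u i - l i) / 2) with hα
  set β : Fin n → ℝ := fun i =>
    if Rhi i - Rlo i = 0 then 0
    else ((p Δt lam i - p Δt 0 i - D.mulVec lam i) - (Rlo i + Rhi i) / 2)
      / ((Rhi i - Rlo i) / 2) with hβ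
  have hαi := fun i => zono_aux (l i) (u i) (y i - p Δt lam i) (hy i).1 (hy i).2
  have hβi := fun i => zono_aux (Rlo i) (Rhi i) _ (hRr i).1 (hRr i).2
  refine ⟨Sum.elim lam (Sum.elim α β), ?_, ?_⟩
  · rw [pi_norm_le_iff_of_nonneg zero_le_one]
    rintro (j | j | j)
    · calc ‖lam j‖ ≤ ‖lam‖ := norm_le_pi_norm lam j
        _ ≤ 1 := hlam
    · exact (hαi j).1
    · exact (hβi j).1
  · funext i
    have hHμ : H.mulVec (Sum.elim lam (Sum.elim α β)) i
        = D.mulVec lam i + α i * ((u i - l i) / 2) + β i * ((Rhi i - Rlo i) / 2) := by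
      subst hH
      simp only [Matrix.mulVec, dotProduct, Fintype.sum_sum_type,
        Matrix.of_apply, Sum.elim_inl, Sum.elim_inr, ite_mul, zero_mul,
        Finset.sum_ite_eq, Finset.mem_univ, if_pos]
      ring
    rw [Pi.add_apply, hHμ, hb, (hαi i).2, (hβi i).2]
    ring
end

section
/- Let 0 < Δt ≤ 1 and let p : ℝ × ℝ^k → ℝ^n and m, r : ℝ → ℝ^n be given with p differentiable at (0,0) (partial time derivative ∂ₜp(0,0) ∈ ℝ^n and Jacobian in λ equal to D_λ p(0,0), an n×k matrix) and m differentiable at 0. Define the remainder function r̃(t,λ,ξ) := p(t,λ) + m(t) + ½·r(t)∘ξ − p(0,0) − m(0) − ∂ₜp(0,0)·t − m′(0)·t − D_λ p(0,0)·λ − ½·r(0)∘ξ, and suppose R⁻, R⁺ ∈ ℝ^n satisfy R⁻ ≤ r̃(t,λ,ξ) ≤ R⁺ componentwise for all t ∈ [0,Δt], λ ∈ ℝ^k with ‖λ‖∞ ≤ 1, and ξ ∈ ℝ^n with ‖ξ‖∞ ≤ 1. Define b := p(0,0) + m(0) + (R⁻+R⁺)/2 and let H be the n×(1+k+2n) matrix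 [∂ₜp(0,0) + m′(0) | D_λ p(0,0) | ½·diag(r(0)) | ½·diag(R⁺−R⁻)]. Then for every t ∈ [0,Δt], every λ with ‖λ‖∞ ≤ 1, and every ξ with ‖ξ‖∞ ≤ 1, the point y := p(t,λ) + m(t) + ½·r(t)∘ξ lies in the zonotope Z(b,H). -/
/-- Zonotope enclosure of the whole Taylor-model reach-tube over [0,Δt]:
every point p(t,λ) + m(t) + ½·r(t)∘ξ with t ∈ [0,Δt], ‖λ‖∞ ≤ 1, ‖ξ‖∞ ≤ 1 lies in
the zonotope with center b = p(0,0) + m(0) + mid[R⁻,R⁺] and generator matrix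
H = [∂ₜp(0,0) + m′(0) | D_λp(0,0) | ½·diag(r(0)) | ½·diag(R⁺−R⁻)], where [R⁻,R⁺]
encloses the remainder of the joint linearization in (t,λ,ξ) at the origin. -/
theorem zonotope_reach_interval
    {n k : ℕ} (Δt : ℝ) (hΔt0 : 0 < Δt) (hΔt1 : Δt ≤ 1)
    (p : ℝ → (Fin k → ℝ) → (Fin n → ℝ)) (m r : ℝ → Fin n → ℝ)
    (dtp m'0 : Fin n → ℝ) (Dl : Matrix (Fin n) (Fin k) ℝ)
    (hdtp : HasDerivAt (fun t => p t 0) dtp 0)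
    (hDl : HasFDerivAt (fun lam => p 0 lam)
      (Matrix.mulVecLin Dl).toContinuousLinearMap 0)
    (hm : HasDerivAt m m'0 0)
    (Rlo Rhi : Fin n → ℝ)
    (hR : ∀ t ∈ Set.Icc (0 : ℝ) Δt, ∀ lam : Fin k → ℝ, ‖lam‖ ≤ 1 →
      ∀ ξ : Fin n → ℝ, ‖ξ‖ ≤ 1 → ∀ i,
        Rlo i ≤ p t lam i + m t i + (r t i / 2) * ξ i - p 0 0 i - m 0 i
                  - dtp i * t - m'0 i * t - Dl.mulVec lam i - (r 0 i / 2) * ξ i ∧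
        p t lam i + m t i + (r t i / 2) * ξ i - p 0 0 i - m 0 i
                  - dtp i * t - m'0 i * t - Dl.mulVec lam i - (r 0 i / 2) * ξ i ≤ Rhi i)
    (b : Fin n → ℝ)
    (hb : b = fun i => p 0 0 i + m 0 i + (Rlo i + Rhi i) / 2)
    (H : Matrix (Fin n) (Unit ⊕ (Fin k ⊕ (Fin n ⊕ Fin n))) ℝ)
    (hH : H = Matrix.of fun i j => Sum.elim (fun _ : Unit => dtp i + m'0 i)
      (Sum.elim (fun jk => Dl i jk)
        (Sum.elim (fun jn => if i = jn then r 0 i / 2 else 0)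
                  (fun jn => if i = jn then (Rhi i - Rlo i) / 2 else 0))) j) :
    ∀ t ∈ Set.Icc (0 : ℝ) Δt, ∀ lam : Fin k → ℝ, ‖lam‖ ≤ 1 →
      ∀ ξ : Fin n → ℝ, ‖ξ‖ ≤ 1 →
        ∃ μ : (Unit ⊕ (Fin k ⊕ (Fin n ⊕ Fin n))) → ℝ, ‖μ‖ ≤ 1 ∧
          (fun i => p t lam i + m t i + (r t i / 2) * ξ i) = b + H.mulVec μ := by
  intro t ht lam hlam ξ hξ
  obtain ⟨s, hs⟩ : ∃ s : Fin n → ℝ, ∀ i, s i =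
      p t lam i + m t i + (r t i / 2) * ξ i - p 0 0 i - m 0 i
        - dtp i * t - m'0 i * t - Dl.mulVec lam i - (r 0 i / 2) * ξ i :=
    ⟨_, fun i => rfl⟩
  have hRs : ∀ i, Rlo i ≤ s i ∧ s i ≤ Rhi i := fun i => by
    rw [hs i]; exact hR t ht lam hlam ξ hξ i
  set η : Fin n → ℝ := fun i =>
    if Rhi i - Rlo i = 0 then 0
    else (s i - (Rlo i + Rhi i) / 2) / ((Rhi i - Rlo i) / 2) with hη
  have key : ∀ j : Fin n, (Rhi j - Rlo j) / 2 * η j = s j - (Rlo j + Rhi j) / 2 := by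
    intro j
    obtain ⟨hlo, hhi⟩ := hRs j
    by_cases h : Rhi j - Rlo j = 0
    · simp only [hη, if_pos h]
      have h1 : Rhi j = Rlo j := by linarith
      have h2 : s j = Rlo j := le_antisymm (h1 ▸ hhi) hlo
      rw [h2, h1]; ring
    · simp only [hη, if_neg h]
      field_simp
  have hbnd : ∀ j : Fin n, ‖η j‖ ≤ 1 := by
    intro j
    obtain ⟨hlo, hhi⟩ := hRs j
    by_cases h : Rhi j - Rlo j = 0
    · simp [hη, h]
    · have hpos : 0 < (Rhi j - Rlo j) / 2 := by
        rcases lt_or_gt_of_ne h with h' | h' <;> linarith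
      simp only [hη, if_neg h]
      rw [Real.norm_eq_abs, abs_div, abs_of_pos hpos, div_le_one hpos, abs_le]
      constructor <;> linarith
  refine ⟨Sum.elim (fun _ => t) (Sum.elim lam (Sum.elim ξ η)), ?_, ?_⟩
  · rw [pi_norm_le_iff_of_nonneg (by norm_num)]
    rintro (j | j | j | j)
    · simp only [Sum.elim_inl, Real.norm_eq_abs, abs_le]
      exact ⟨le_trans (by norm_num) ht.1, le_trans ht.2 hΔt1⟩
    · exact le_trans (norm_le_pi_norm lam j) hlam
    · exact le_trans (norm_le_pi_norm ξ j) hξ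
    · exact hbnd j
  · funext i
    have hmv : H.mulVec (Sum.elim (fun _ => t) (Sum.elim lam (Sum.elim ξ η))) i
        = (dtp i + m'0 i) * t + Dl.mulVec lam i + (r 0 i / 2) * ξ i
          + (Rhi i - Rlo i) / 2 * η i := by
      subst hH
      simp only [Matrix.mulVec, dotProduct, Fintype.sum_sum_type,
        Matrix.of_apply, Sum.elim_inl, Sum.elim_inr, Finset.univ_unique,
        Finset.sum_singleton, ite_mul, zero_mul]
      rw [Finset.sum_ite_eq Finset.univ i (fun jn => r 0 i / 2 * ξ jn),
        Finset.sum_ite_eq Finset.univ i (fun jn => (Rhi i - Rlo i) / 2 * η jn)]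
      simp [Matrix.mulVec, dotProduct]
      ring
    simp only [Pi.add_apply, hmv, hb, key i]
    linarith [hs i]
end
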